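/- Let ε be a standard logistic random variable (CDF F(s) = 1/(1+e^{−s})). Then for every real s, ∫_{−∞}^{s} x · e^x/(1+e^x)² dx = −H(1/(1+e^{−s})), where H(z) = −z log z − (1−z) log(1−z) is the binary entropy function. -/

import Mathlib

open Real Set Filter MeasureTheory intervalIntegral
open scoped Topology

/-- Binary entropy function. -/
noncomputable def binEnt (z : ℝ) : ℝ := -z * Real.log z - (1 - z) * Real.log (1 - z)

lemma integrableOn_exp_half_Iic (c : ℝ) :
    IntegrableOn (fun x => Real.exp (x / 2)) (Set.Iic c) := by
  refine integrableOn_Iic_of_intervalIntegral_norm_bounded (2 * Real.exp (c / 2)) c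
    (fun y => ((Real.continuous_exp.comp (continuous_id.div_const 2)).integrableOn_Ioc))
    tendsto_id (Eventually.of_forall fun y => ?_)
  have : (∫ x in y..c, ‖Real.exp (x / 2)‖) = ∫ x in y..c, Real.exp (x / 2) := by
    congr 1; ext x; exact norm_of_nonneg (Real.exp_pos _).le
  simp only [id_eq]
  rw [this, intervalIntegral.integral_comp_div (f := Real.exp) (two_ne_zero), integral_exp]
  have := (Real.exp_pos (y / 2)).le
  simp only [smul_eq_mul]
  nlinarith [Real.exp_pos (c/2)]

lemma hasDerivAt_F (x : ℝ) :
    HasDerivAt (fun x => x * (Real.exp x / (1 + Real.exp x)) - Real.log (1 + Real.exp x))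
      (x * (Real.exp x / (1 + Real.exp x)^2)) x := by
  have hpos : (0:ℝ) < 1 + Real.exp x := by positivity
  have hne : (1 + Real.exp x) ≠ 0 := ne_of_gt hpos
  have h1 : HasDerivAt (fun x => 1 + Real.exp x) (Real.exp x) x :=
    (Real.hasDerivAt_exp x).const_add 1
  have hσ : HasDerivAt (fun x => Real.exp x / (1 + Real.exp x))
      (Real.exp x / (1 + Real.exp x)^2) x := by
    have := (Real.hasDerivAt_exp x).div h1 hne
    exact this.congr_deriv (by ring)
  have hprod : HasDerivAt (fun x => x * (Real.exp x / (1 + Real.exp x)))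
      (1 * (Real.exp x / (1 + Real.exp x)) + x * (Real.exp x / (1 + Real.exp x)^2)) x :=
    (hasDerivAt_id x).mul hσ
  have hlog : HasDerivAt (fun x => Real.log (1 + Real.exp x))
      (Real.exp x / (1 + Real.exp x)) x := h1.log hne
  have := hprod.sub hlog
  exact this.congr_deriv (by ring)

lemma tendsto_F_atBot :
    Tendsto (fun x => x * (Real.exp x / (1 + Real.exp x)) - Real.log (1 + Real.exp x))
      atBot (𝓝 0) := by
  have h1 : Tendsto (fun x : ℝ => x * Real.exp x) atBot (𝓝 0) := by
    have := (Real.tendsto_pow_mul_exp_neg_atTop_nhds_zero 1).comp tendsto_neg_atBot_atTop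
    simpa [Function.comp, neg_mul] using this.neg
  have hexp : Tendsto (fun x : ℝ => Real.exp x) atBot (𝓝 0) := Real.tendsto_exp_atBot
  have hden : Tendsto (fun x : ℝ => 1 + Real.exp x) atBot (𝓝 1) := by
    simpa using hexp.const_add 1
  have h2 : Tendsto (fun x : ℝ => x * (Real.exp x / (1 + Real.exp x))) atBot (𝓝 0) := by
    have := h1.div hden (by norm_num)
    rw [zero_div] at this
    exact this.congr (fun x => by simp [Pi.div_apply, mul_div_assoc])
  have h3 : Tendsto (fun x : ℝ => Real.log (1 + Real.exp x)) atBot (𝓝 0) := by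
    have := (Real.continuousAt_log (by norm_num : (1:ℝ) ≠ 0)).tendsto.comp hden
    simpa [Function.comp_def] using this
  simpa using h2.sub h3

/-- Partial first moment of the standard logistic distribution:
`∫_{-∞}^s x e^x/(1+e^x)² dx = -H(1/(1+e^{-s}))`. -/
theorem stmt_15 (s : ℝ) :
    ∫ x in Set.Iic s, x * (Real.exp x / (1 + Real.exp x)^2) =
      -binEnt (1 / (1 + Real.exp (-s))) := by
  have hint : IntegrableOn (fun x => x * (Real.exp x / (1 + Real.exp x)^2)) (Set.Iic s) := by
    have hmeas : AEStronglyMeasurable (fun x => x * (Real.exp x / (1 + Real.exp x)^2))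
        (volume.restrict (Set.Iic s)) := by
      apply Continuous.aestronglyMeasurable
      exact continuous_id.mul (Real.continuous_exp.div
        ((continuous_const.add Real.continuous_exp).pow 2) (fun x => by positivity))
    refine Integrable.mono (((integrableOn_exp_half_Iic s).const_mul (2 + |s|))) hmeas ?_
    rw [ae_restrict_iff' measurableSet_Iic]
    refine Eventually.of_forall fun x hx => ?_
    simp only [Set.mem_Iic] at hx
    have hpos : (0:ℝ) < 1 + Real.exp x := by positivity
    have hdens : Real.exp x / (1 + Real.exp x)^2 ≤ Real.exp x := by
      rw [div_le_iff₀ (by positivity)]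
      nlinarith [Real.exp_pos x, sq_nonneg (Real.exp x)]
    have hdens0 : (0:ℝ) ≤ Real.exp x / (1 + Real.exp x)^2 := by positivity
    rw [Real.norm_eq_abs, Real.norm_eq_abs, abs_mul, abs_of_nonneg hdens0]
    have hrhs : |(2 + |s|) * Real.exp (x / 2)| = (2 + |s|) * Real.exp (x / 2) := by
      apply abs_of_nonneg; positivity
    rw [hrhs]
    rcases le_or_gt x 0 with hx0 | hx0
    · -- |x| ≤ 2 exp(-x/2), density ≤ exp x
      have h1 : |x| ≤ 2 * Real.exp (-x / 2) := by
        rw [abs_of_nonpos hx0]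
        nlinarith [Real.add_one_le_exp (-x / 2)]
      calc |x| * (Real.exp x / (1 + Real.exp x)^2)
          ≤ (2 * Real.exp (-x / 2)) * Real.exp x := by
            apply mul_le_mul h1 hdens hdens0 (by positivity)
        _ = 2 * Real.exp (x / 2) := by
            rw [mul_assoc, ← Real.exp_add]; ring_nf
        _ ≤ (2 + |s|) * Real.exp (x / 2) := by
            have := Real.exp_pos (x / 2); nlinarith [abs_nonneg s]
    · -- 0 < x ≤ s : |x| ≤ |s|, density ≤ exp(-x) ≤ 1 ≤ exp(x/2)
      have hxs : |x| ≤ |s| := by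
        rw [abs_of_pos hx0, abs_of_pos (lt_of_lt_of_le hx0 hx)]; exact hx
      have hd2 : Real.exp x / (1 + Real.exp x)^2 ≤ 1 := by
        rw [div_le_one (by positivity)]
        nlinarith [Real.exp_pos x, sq_nonneg (Real.exp x)]
      have he : (1:ℝ) ≤ Real.exp (x / 2) := Real.one_le_exp (by linarith)
      calc |x| * (Real.exp x / (1 + Real.exp x)^2)
          ≤ |s| * 1 := mul_le_mul hxs hd2 hdens0 (abs_nonneg s)
        _ ≤ (2 + |s|) * Real.exp (x / 2) := by nlinarith [abs_nonneg s]
  have key := integral_Iic_of_hasDerivAt_of_tendsto' (a := s)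
    (f := fun x => x * (Real.exp x / (1 + Real.exp x)) - Real.log (1 + Real.exp x))
    (fun x _ => hasDerivAt_F x) hint tendsto_F_atBot
  rw [key]
  -- now algebra
  have hes : (0:ℝ) < Real.exp s := Real.exp_pos s
  have hpos : (0:ℝ) < 1 + Real.exp s := by positivity
  have hp : 1 / (1 + Real.exp (-s)) = Real.exp s / (1 + Real.exp s) := by
    rw [Real.exp_neg]
    rw [one_div, eq_div_iff (ne_of_gt hpos), inv_mul_eq_div, div_eq_iff (by positivity)]
    field_simp
    ring
  have h1p : 1 - Real.exp s / (1 + Real.exp s) = 1 / (1 + Real.exp s) := by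
    field_simp
    ring
  rw [hp]
  unfold binEnt
  rw [h1p]
  have hlogp : Real.log (Real.exp s / (1 + Real.exp s)) = s - Real.log (1 + Real.exp s) := by
    rw [Real.log_div (ne_of_gt hes) (ne_of_gt hpos), Real.log_exp]
  have hlogq : Real.log (1 / (1 + Real.exp s)) = -Real.log (1 + Real.exp s) := by
    rw [Real.log_div one_ne_zero (ne_of_gt hpos), Real.log_one]; ring
  rw [hlogp, hlogq]
  field_simp
  all_goals ring
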